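/- arXiv:2207.01727 — 2 statements merged into one kernel-verified Lean document; each statement's English description precedes it below -/
import Mathlib

section
/- With the matrix A as above and p ∈ (0,1], α > 0, and s_N > 0, every eigenvalue of A has strictly negative real part, and hence A is invertible. -/
open Finset

lemma hierarchy_key (N : ℕ) (p α : ℝ) (hp : p ∈ Set.Ioc (0:ℝ) 1)
    (hα : α ∈ Set.Ioc (0:ℝ) 1)
    (g s : Fin (N + 1) → ℝ) (hg : ∀ j, 0 ≤ g j) (hs : ∀ j, 0 ≤ s j)
    (hsN : 0 < s (Fin.last N))
    (hsum : ∑ j, (α * s j + (1 - α) * g j) = 1)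
    (S : Fin (N + 1) → ℝ)
    (hS : ∀ i, S i = ∑ j, if i ≤ j then α * s j + (1 - α) * g j else 0)
    (A : Matrix (Fin (N + 1)) (Fin (N + 1)) ℝ)
    (hdiag : ∀ i, A i i = (1 - α) * g i - (p + (1 - p) * S i))
    (hoff : ∀ i j, i ≠ j →
      A i j = (1 - α) * (p + (1 - p) * (if i ≤ j then (1:ℝ) else 0)) * g j) :
    ∀ k, ∑ j ∈ Finset.univ.erase k, |A k j| < -(A k k) := by
  intro k
  set w : Fin (N+1) → ℝ := fun j => p + (1 - p) * (if k ≤ j then (1:ℝ) else 0) with hw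
  have hw_pos : ∀ j, 0 < w j := by
    intro j
    simp only [hw]
    split_ifs <;> nlinarith [hp.1, hp.2]
  have hw_le : ∀ j, w j ≤ 1 := by
    intro j
    simp only [hw]
    split_ifs <;> nlinarith [hp.1, hp.2]
  have hwk : w k = 1 := by simp [hw]
  -- off-diagonal entries nonneg and equal to (1-α) * w j * g j
  have hoff' : ∀ j, j ≠ k → A k j = (1 - α) * w j * g j := fun j hj =>
    hoff k j (Ne.symm hj)
  have habs : ∀ j ∈ Finset.univ.erase k, |A k j| = (1 - α) * w j * g j := by
    intro j hj
    rw [hoff' j (Finset.mem_erase.mp hj).1, abs_of_nonneg]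
    exact mul_nonneg (mul_nonneg (by linarith [hα.2]) (hw_pos j).le) (hg j)
  -- identity: p + (1-p) S k = ∑ j, w j * (α s j + (1-α) g j)
  have hid : p + (1 - p) * S k = ∑ j, w j * (α * s j + (1 - α) * g j) := by
    have : ∑ j, w j * (α * s j + (1 - α) * g j)
        = p * ∑ j, (α * s j + (1 - α) * g j)
          + (1 - p) * ∑ j, (if k ≤ j then α * s j + (1 - α) * g j else 0) := by
      rw [Finset.mul_sum, Finset.mul_sum, ← Finset.sum_add_distrib]
      refine Finset.sum_congr rfl fun j _ => ?_
      simp only [hw]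
      split_ifs <;> ring
    rw [this, hsum, ← hS k]; ring
  have hsum_eq : ∑ j ∈ Finset.univ.erase k, |A k j| + A k k
      = -(α * ∑ j, w j * s j) := by
    rw [Finset.sum_congr rfl habs, hdiag k, hid]
    have h1 : ∑ j ∈ Finset.univ.erase k, (1 - α) * w j * g j
        = (∑ j, (1 - α) * w j * g j) - (1 - α) * g k := by
      rw [Finset.sum_erase_eq_sub (Finset.mem_univ k), hwk]; ring_nf
    rw [h1]
    have h5 : ∑ j, ((1 - α) * w j * g j) - ∑ j, w j * (α * s j + (1 - α) * g j)
        = ∑ j, -(α * (w j * s j)) := by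
      rw [← Finset.sum_sub_distrib]
      exact Finset.sum_congr rfl fun j _ => by ring
    have h6 : ∑ j, -(α * (w j * s j)) = -(α * ∑ j, w j * s j) := by
      rw [Finset.mul_sum, ← Finset.sum_neg_distrib]
    linarith
  have hpos : α * s (Fin.last N) ≤ α * ∑ j, w j * s j := by
    have h3 : w (Fin.last N) * s (Fin.last N) ≤ ∑ j, w j * s j := by
      apply Finset.single_le_sum (f := fun j => w j * s j)
        (fun j _ => mul_nonneg (hw_pos j).le (hs j)) (Finset.mem_univ _)
    have h4 : w (Fin.last N) = 1 := by simp [hw, Fin.le_last]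
    rw [h4, one_mul] at h3
    exact mul_le_mul_of_nonneg_left h3 hα.1.le
  nlinarith [hα.1, hsN]

/-- For `p ∈ (0,1]`, `α > 0`, `s_N > 0`, every eigenvalue of the hierarchy matrix `A`
has strictly negative real part, and hence `A` is invertible. -/
theorem hierarchy_matrix_stable (N : ℕ) (p α : ℝ) (hp : p ∈ Set.Ioc (0:ℝ) 1)
    (hα : α ∈ Set.Ioc (0:ℝ) 1)
    (g s : Fin (N + 1) → ℝ) (hg : ∀ j, 0 ≤ g j) (hs : ∀ j, 0 ≤ s j)
    (hsN : 0 < s (Fin.last N))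
    (hsum : ∑ j, (α * s j + (1 - α) * g j) = 1)
    (S : Fin (N + 1) → ℝ)
    (hS : ∀ i, S i = ∑ j, if i ≤ j then α * s j + (1 - α) * g j else 0)
    (A : Matrix (Fin (N + 1)) (Fin (N + 1)) ℝ)
    (hdiag : ∀ i, A i i = (1 - α) * g i - (p + (1 - p) * S i))
    (hoff : ∀ i j, i ≠ j →
      A i j = (1 - α) * (p + (1 - p) * (if i ≤ j then (1:ℝ) else 0)) * g j) :
    (∀ z ∈ spectrum ℂ (A.map (Complex.ofReal ·)), z.re < 0) ∧ IsUnit A := by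
  have key := hierarchy_key N p α hp hα g s hg hs hsN hsum S hS A hdiag hoff
  constructor
  · intro z hz
    set B := A.map (Complex.ofReal ·) with hB
    have hz' : Module.End.HasEigenvalue (Matrix.toLin' B) z := by
      rw [← Matrix.toLin_eq_toLin' (R := ℂ)]
      rw [Module.End.hasEigenvalue_iff_mem_spectrum]
      rwa [show Matrix.toLin (Pi.basisFun ℂ (Fin (N+1))) (Pi.basisFun ℂ (Fin (N+1))) B
          = Matrix.toLinAlgEquiv (Pi.basisFun ℂ (Fin (N+1))) B from rfl,
        AlgEquiv.spectrum_eq]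
    obtain ⟨k, hk⟩ := eigenvalue_mem_ball hz'
    rw [Metric.mem_closedBall] at hk
    have hBkk : B k k = (A k k : ℂ) := rfl
    have hnorm : ∀ j, ‖B k j‖ = |A k j| := fun j => Complex.norm_real _
    have hre : z.re - A k k ≤ ∑ j ∈ Finset.univ.erase k, |A k j| := by
      calc z.re - A k k = (z - (A k k : ℂ)).re := by simp
        _ ≤ ‖z - (A k k : ℂ)‖ := by
            exact Complex.re_le_norm _
        _ ≤ ∑ j ∈ Finset.univ.erase k, ‖B k j‖ := by
            rw [← hBkk, ← dist_eq_norm]; exact hk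
        _ = ∑ j ∈ Finset.univ.erase k, |A k j| :=
            Finset.sum_congr rfl fun j _ => hnorm j
    have := key k
    linarith
  · rw [Matrix.isUnit_iff_isUnit_det, isUnit_iff_ne_zero]
    apply det_ne_zero_of_sum_row_lt_diag
    intro k
    have h1 := key k
    have h2 : ∑ j ∈ Finset.univ.erase k, |A k j| ≥ 0 :=
      Finset.sum_nonneg fun j _ => abs_nonneg _
    have h3 : A k k < 0 := by linarith
    calc ∑ j ∈ Finset.univ.erase k, ‖A k j‖
        = ∑ j ∈ Finset.univ.erase k, |A k j| := rfl
      _ < -(A k k) := h1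
      _ = ‖A k k‖ := (abs_of_neg h3).symm
end

section
/- Let A be an upper triangular N×N real matrix with A_{NN} = 0 and A_{ii} < 0 for i < N, and let B ∈ ℝ^N with B_N = 0. Then any solution X of X' = AX + B satisfies: X_N(t) = X_N(0) for all t, and for each i < N, X_i(t) converges as t → ∞ to the value m_i determined recursively by m_N = X_N(0) and m_i = (∑_{j>i} A_{ij} m_j + B_i)/(-A_{ii}). -/
open Filter Finset

/-- Key ODE lemma: if `y' = a y + g` with `a < 0` and `g → 0`, then `y → 0`. -/
lemma ode_tendsto_zero {a : ℝ} (ha : a < 0) {y g : ℝ → ℝ}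
    (hy : ∀ t : ℝ, 0 ≤ t → HasDerivAt y (a * y t + g t) t)
    (hg : Filter.Tendsto g atTop (nhds 0)) :
    Filter.Tendsto y atTop (nhds 0) := by
  rw [Metric.tendsto_nhds]
  intro ε hε
  have hna : (0:ℝ) < -a := by linarith
  -- choose T ≥ 0 beyond which |g| ≤ (-a) * ε / 2
  obtain ⟨T₀, hT₀⟩ := (Metric.tendsto_atTop.mp hg ((-a) * ε / 2) (by positivity))
  set T : ℝ := max T₀ 0 with hTdef
  have hT0 : (0:ℝ) ≤ T := le_max_right _ _
  have hgle : ∀ t, T ≤ t → |g t| ≤ (-a) * ε / 2 := by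
    intro t ht
    have := hT₀ t (le_trans (le_max_left _ _) ht)
    rw [Real.dist_eq, sub_zero] at this
    exact this.le
  -- auxiliary functions
  set u : ℝ → ℝ := fun t => Real.exp (-a * t) * y t - ε / 2 * Real.exp (-a * t) with hudef
  set w : ℝ → ℝ := fun t => Real.exp (-a * t) * y t + ε / 2 * Real.exp (-a * t) with hwdef
  have hexp : ∀ x : ℝ, HasDerivAt (fun t : ℝ => Real.exp (-a * t)) (-a * Real.exp (-a * x)) x := by
    intro x
    have h1 : HasDerivAt (fun t : ℝ => -a * t) (-a) x := by
      simpa using (hasDerivAt_id x).const_mul (-a)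
    simpa [mul_comm] using h1.exp
  have hud : ∀ x : ℝ, 0 ≤ x →
      HasDerivAt u (Real.exp (-a * x) * (g x + a * (ε / 2))) x := by
    intro x hx
    have h1 := ((hexp x).mul (hy x hx)).sub ((hexp x).const_mul (ε / 2))
    exact h1.congr_deriv (by ring)
  have hwd : ∀ x : ℝ, 0 ≤ x →
      HasDerivAt w (Real.exp (-a * x) * (g x - a * (ε / 2))) x := by
    intro x hx
    have h1 := ((hexp x).mul (hy x hx)).add ((hexp x).const_mul (ε / 2))
    exact h1.congr_deriv (by ring)
  -- u is antitone on [T, ∞), w is monotone on [T, ∞)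
  have hTle : Set.Ici T ⊆ Set.Ici (0:ℝ) := Set.Ici_subset_Ici.2 hT0
  have hu_anti : AntitoneOn u (Set.Ici T) := by
    apply antitoneOn_of_deriv_nonpos (convex_Ici T)
    · intro x hx; exact (hud x (hTle hx)).continuousAt.continuousWithinAt
    · intro x hx
      rw [interior_Ici] at hx
      exact ((hud x (le_trans hT0 (le_of_lt hx))).differentiableAt).differentiableWithinAt
    · intro x hx
      rw [interior_Ici] at hx
      rw [(hud x (le_trans hT0 (le_of_lt hx))).deriv]
      have hgx := hgle x (le_of_lt hx)
      have : g x + a * (ε / 2) ≤ 0 := by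
        have := (abs_le.mp hgx).2
        linarith
      exact mul_nonpos_of_nonneg_of_nonpos (Real.exp_pos _).le this
  have hw_mono : MonotoneOn w (Set.Ici T) := by
    apply monotoneOn_of_deriv_nonneg (convex_Ici T)
    · intro x hx; exact (hwd x (hTle hx)).continuousAt.continuousWithinAt
    · intro x hx
      rw [interior_Ici] at hx
      exact ((hwd x (le_trans hT0 (le_of_lt hx))).differentiableAt).differentiableWithinAt
    · intro x hx
      rw [interior_Ici] at hx
      rw [(hwd x (le_trans hT0 (le_of_lt hx))).deriv]
      have hgx := hgle x (le_of_lt hx)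
      have : 0 ≤ g x - a * (ε / 2) := by
        have := (abs_le.mp hgx).1
        linarith
      exact mul_nonneg (Real.exp_pos _).le this
  -- the pointwise bound for t ≥ T
  set C : ℝ := |y T| + ε / 2 with hC
  have hbound : ∀ t, T ≤ t → |y t| ≤ ε / 2 + Real.exp (a * (t - T)) * C := by
    intro t ht
    have hu := hu_anti (Set.self_mem_Ici) (Set.mem_Ici.2 ht) ht
    have hw := hw_mono (Set.self_mem_Ici) (Set.mem_Ici.2 ht) ht
    have hE1 : Real.exp (a * t) * Real.exp (-a * t) = 1 := by
      rw [← Real.exp_add]; ring_nf; exact Real.exp_zero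
    have hE2 : Real.exp (a * t) * Real.exp (-a * T) = Real.exp (a * (t - T)) := by
      rw [← Real.exp_add]; ring_nf
    have hposT : (0:ℝ) < Real.exp (a * t) := Real.exp_pos _
    have hposE : (0:ℝ) < Real.exp (a * (t - T)) := Real.exp_pos _
    have e1 : Real.exp (a * t) * u t = y t - ε / 2 := by
      simp only [hudef]
      linear_combination (y t - ε / 2) * hE1
    have e2 : Real.exp (a * t) * u T = Real.exp (a * (t - T)) * (y T - ε / 2) := by
      simp only [hudef]
      linear_combination (y T - ε / 2) * hE2
    have e3 : Real.exp (a * t) * w t = y t + ε / 2 := by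
      simp only [hwdef]
      linear_combination (y t + ε / 2) * hE1
    have e4 : Real.exp (a * t) * w T = Real.exp (a * (t - T)) * (y T + ε / 2) := by
      simp only [hwdef]
      linear_combination (y T + ε / 2) * hE2
    have hu' := mul_le_mul_of_nonneg_left hu hposT.le
    rw [e1, e2] at hu'
    have hw' := mul_le_mul_of_nonneg_left hw hposT.le
    rw [e3, e4] at hw'
    have hb1 : Real.exp (a * (t - T)) * (y T - ε / 2) ≤ Real.exp (a * (t - T)) * C :=
      mul_le_mul_of_nonneg_left (by have := le_abs_self (y T); rw [hC]; linarith) hposE.le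
    have hb2 : Real.exp (a * (t - T)) * (-C) ≤ Real.exp (a * (t - T)) * (y T + ε / 2) :=
      mul_le_mul_of_nonneg_left (by have := neg_abs_le (y T); rw [hC]; linarith) hposE.le
    rw [mul_neg] at hb2
    refine abs_le.mpr ⟨by linarith, by linarith⟩
  -- the bound eventually drops below ε
  have hlim : Filter.Tendsto (fun t => ε / 2 + Real.exp (a * (t - T)) * C) atTop
      (nhds (ε / 2)) := by
    have h1 : Filter.Tendsto (fun t : ℝ => a * (t - T)) atTop atBot := by
      apply (tendsto_const_mul_atBot_of_neg ha).mpr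
      exact tendsto_atTop_add_const_right _ (-T) tendsto_id
    have h2 : Filter.Tendsto (fun t : ℝ => Real.exp (a * (t - T)) * C) atTop (nhds 0) := by
      simpa using (Real.tendsto_exp_atBot.comp h1).mul_const C
    simpa using h2.const_add (ε / 2)
  have h3 : ∀ᶠ t in atTop, ε / 2 + Real.exp (a * (t - T)) * C < ε :=
    hlim.eventually (Filter.Tendsto.eventually_lt_const (by linarith) tendsto_id) |>.mono (fun t ht => ht)
  filter_upwards [h3, eventually_ge_atTop T] with t h3t hTt
  rw [Real.dist_eq, sub_zero]
  exact lt_of_le_of_lt (hbound t hTt) h3t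

/-- Upper triangular system with `A_{NN} = 0`, `A_{ii} < 0` for `i < N` and `B_N = 0`:
the top component is conserved and the lower components converge to the recursively
defined values `m_i`. -/
theorem upper_triangular_limit (N : ℕ) (A : Matrix (Fin (N + 1)) (Fin (N + 1)) ℝ)
    (htri : ∀ i j, j < i → A i j = 0)
    (htop : A (Fin.last N) (Fin.last N) = 0)
    (hdiag : ∀ i, i ≠ Fin.last N → A i i < 0)
    (B : Fin (N + 1) → ℝ) (hB : B (Fin.last N) = 0)
    (X : ℝ → Fin (N + 1) → ℝ)
    (hX : ∀ t : ℝ, 0 ≤ t → HasDerivAt X (A.mulVec (X t) + B) t)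
    (m : Fin (N + 1) → ℝ)
    (hmN : m (Fin.last N) = X 0 (Fin.last N))
    (hm : ∀ i, i ≠ Fin.last N →
      m i = ((∑ j, if i < j then A i j * m j else 0) + B i) / (-A i i)) :
    (∀ t : ℝ, 0 ≤ t → X t (Fin.last N) = X 0 (Fin.last N)) ∧
      ∀ i, i ≠ Fin.last N → Tendsto (fun t => X t i) atTop (nhds (m i)) := by
  -- componentwise derivative
  have hXi : ∀ (i : Fin (N + 1)) (t : ℝ), 0 ≤ t →
      HasDerivAt (fun s => X s i) ((A.mulVec (X t) + B) i) t := by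
    intro i t ht
    exact ((ContinuousLinearMap.proj i : (Fin (N + 1) → ℝ) →L[ℝ] ℝ).hasFDerivAt.comp_hasDerivAt
      t (hX t ht))
  -- top component is conserved
  have hconst : ∀ t : ℝ, 0 ≤ t → X t (Fin.last N) = X 0 (Fin.last N) := by
    intro t ht
    have hzero : ∀ s : ℝ, 0 ≤ s → HasDerivAt (fun r => X r (Fin.last N)) 0 s := by
      intro s hs
      have h := hXi (Fin.last N) s hs
      have hval : (A.mulVec (X s) + B) (Fin.last N) = 0 := by
        simp only [Pi.add_apply, Matrix.mulVec, dotProduct, hB, add_zero]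
        apply Finset.sum_eq_zero
        intro j _
        rcases eq_or_lt_of_le (Fin.le_last j) with hj | hj
        · rw [hj, htop, zero_mul]
        · rw [htri _ _ hj, zero_mul]
      rwa [hval] at h
    have := constant_of_has_deriv_right_zero (f := fun r => X r (Fin.last N)) (a := 0) (b := t)
      (fun s hs => (hzero s hs.1).continuousAt.continuousWithinAt)
      (fun s hs => (hzero s hs.1).hasDerivWithinAt)
    exact this t ⟨ht, le_refl t⟩
  refine ⟨hconst, ?_⟩
  -- strong downward induction: all components converge to m
  have claim : ∀ k : ℕ, ∀ i : Fin (N + 1), N - i.val ≤ k →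
      Tendsto (fun t => X t i) atTop (nhds (m i)) := by
    intro k
    induction k with
    | zero =>
      intro i hi
      have hiN : i = Fin.last N := by
        apply Fin.ext
        have := Nat.le_of_sub_eq_zero (Nat.le_zero.mp hi)
        have h2 := Fin.is_le i
        simp [Fin.last]
        omega
      subst hiN
      rw [hmN]
      apply Tendsto.congr' _ tendsto_const_nhds
      filter_upwards [eventually_ge_atTop (0:ℝ)] with t ht
      exact (hconst t ht).symm
    | succ k ih =>
      intro i hi
      by_cases hil : i = Fin.last N
      · subst hil
        rw [hmN]
        apply Tendsto.congr' _ tendsto_const_nhds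
        filter_upwards [eventually_ge_atTop (0:ℝ)] with t ht
        exact (hconst t ht).symm
      · -- i < last
        set a : ℝ := A i i with ha
        have hai : a < 0 := hdiag i hil
        set S : ℝ := (∑ j, if i < j then A i j * m j else 0) with hS
        have hane : a ≠ 0 := ne_of_lt hai
        have hmi : (-a) * m i = S + B i := by
          have hne : (-a) ≠ 0 := by simpa using hane
          rw [hm i hil, ← hS, ← ha, mul_comm, div_mul_cancel₀ _ hne]
        -- the forcing term
        set g : ℝ → ℝ := fun t => (∑ j, if i < j then A i j * X t j else 0) + B i with hg
        -- derivative identity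
        have hydev : ∀ t : ℝ, 0 ≤ t →
            HasDerivAt (fun s => X s i - m i)
              (a * (X t i - m i) + (g t + a * m i)) t := by
          intro t ht
          have h := (hXi i t ht).sub_const (m i)
          have hval : (A.mulVec (X t) + B) i
              = a * (X t i - m i) + (g t + a * m i) := by
            simp only [Pi.add_apply, Matrix.mulVec, dotProduct, hg]
            have hsplit : ∑ j, A i j * X t j
                = a * X t i + ∑ j, if i < j then A i j * X t j else 0 := by
              have : ∀ j : Fin (N + 1), A i j * X t j =
                  (if j = i then a * X t i else 0) + (if i < j then A i j * X t j else 0) := by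
                intro j
                rcases lt_trichotomy j i with hj | hj | hj
                · rw [htri i j hj, zero_mul, if_neg (ne_of_lt hj), if_neg (not_lt.mpr hj.le),
                    add_zero]
                · subst hj; simp [ha]
                · rw [if_neg (ne_of_gt hj), if_pos hj, zero_add]
              rw [Finset.sum_congr rfl (fun j _ => this j), Finset.sum_add_distrib,
                Finset.sum_ite_eq' Finset.univ i (fun _ => a * X t i)]
              simp
            rw [hsplit]; ring
          rwa [hval] at h
        -- the forcing term tends to -a * m i ... combined term tends to 0
        have hgtends : Tendsto (fun t => g t + a * m i) atTop (nhds 0) := by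
          have hterm : Tendsto (fun t => ∑ j, if i < j then A i j * X t j else 0)
              atTop (nhds S) := by
            rw [hS]
            apply tendsto_finset_sum
            intro j _
            by_cases hij : i < j
            · simp only [if_pos hij]
              apply Tendsto.const_mul
              apply ih j
              have hij' : i.val < j.val := hij
              have hiN : i.val < N := lt_of_lt_of_le hij' (Fin.is_le j)
              omega
            · simp only [if_neg hij]
              exact tendsto_const_nhds
          have := (hterm.add_const (B i)).add_const (a * m i)
          have heq : S + B i + a * m i = 0 := by
            rw [← hmi]; ring
          rwa [heq] at this
        have hy0 := ode_tendsto_zero hai hydev hgtends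
        have := hy0.add_const (m i)
        simpa using this
  intro i _
  exact claim (N - i.val) i (le_refl _)
end
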